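/- Let K be any field and G a finite group acting on K(x₁,…,xₙ) by monomial K-automorphisms (each σ sends xⱼ to a nonzero constant times a power product of the xᵢ, with exponent matrix in GLₙ(ℤ)). Let H₀ be the kernel of the induced homomorphism G → GLₙ(ℤ) recording the exponent matrices. Then H₀ is abelian, and the fixed field K(x₁,…,xₙ)^{H₀} equals K(M₁,…,Mₙ) for some power products M₁,…,Mₙ in x₁,…,xₙ which are algebraically independent over K. -/

import Mathlib

/-- The rational function field in `n` variables over `K`. -/
noncomputable abbrev RatFuncN (K : Type*) [Field K] (n : ℕ) : Type _ :=
  FractionRing (MvPolynomial (Fin n) K)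

open MvPolynomial

section Aux
variable {K : Type*} [Field K] {n : ℕ}

local notation "R" => MvPolynomial (Fin n) K
local notation "F" => RatFuncN K n

lemma Xf_ne_zero (i : Fin n) : (algebraMap R F) (X i) ≠ 0 := by
  simp only [ne_eq, map_eq_zero_iff _ (IsFractionRing.injective R F)]
  exact X_ne_zero i

lemma amono (d : Fin n →₀ ℕ) (a : K) :
    (algebraMap R F) (monomial d a)
      = algebraMap K F a * ∏ i, (algebraMap R F) (X i) ^ ((d i : ℤ)) := by
  rw [monomial_eq, map_mul]
  congr 1
  · rw [Finsupp.prod_fintype _ _ (fun i => pow_zero _), map_prod]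
    exact Finset.prod_congr rfl fun i _ => by rw [map_pow, zpow_natCast]
end Aux

section Aux2
variable {K : Type*} [Field K] {n : ℕ}

local notation "R" => MvPolynomial (Fin n) K
local notation "F" => RatFuncN K n

set_option maxHeartbeats 1000000 in
lemma laurent_li :
    LinearIndependent K (fun l : Fin n → ℤ => ∏ i, (algebraMap R F) (X i) ^ (l i)) := by
  rw [linearIndependent_iff']
  intro s g hsum l0 hl0
  classical
  set B : ℕ := s.sup fun l => Finset.univ.sup fun i => (l i).natAbs with hB
  clear_value B
  have hge : ∀ l ∈ s, ∀ i : Fin n, 0 ≤ l i + B := by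
    intro l hl i
    have h1 : (l i).natAbs ≤ Finset.univ.sup fun i => (l i).natAbs :=
      Finset.le_sup (f := fun i => (l i).natAbs) (Finset.mem_univ i)
    have h2 : (Finset.univ.sup fun i => (l i).natAbs) ≤ B := by
      rw [hB]
      exact Finset.le_sup (f := fun l => Finset.univ.sup fun i => (l i).natAbs) hl
    clear hB
    omega
  set t : (Fin n → ℤ) → (Fin n →₀ ℕ) :=
    fun l => Finsupp.equivFunOnFinite.symm (fun i => (l i + B).toNat) with htdef
  have htv : ∀ l, ∀ i : Fin n, (t l) i = (l i + B).toNat := fun l i => rfl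
  clear_value t
  have ht : ∀ l ∈ s, ∀ i : Fin n, (((t l) i : ℕ) : ℤ) = l i + B := by
    intro l hl i
    rw [htv]
    exact Int.toNat_of_nonneg (hge l hl i)
  set P : R := ∑ l ∈ s, monomial (t l) (g l) with hPdef
  have hPmap : (algebraMap R F) P
      = (∑ l ∈ s, g l • ∏ i, (algebraMap R F) (X i) ^ (l i)) * ∏ i, (algebraMap R F) (X i) ^ (B : ℤ) := by
    rw [hPdef, map_sum, Finset.sum_mul]
    refine Finset.sum_congr rfl fun l hl => ?_
    rw [amono, Algebra.smul_def, mul_assoc, ← Finset.prod_mul_distrib]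
    congr 1
    refine Finset.prod_congr rfl fun i _ => ?_
    rw [← zpow_add₀ (Xf_ne_zero i), ht l hl i]
  have hP0 : P = 0 := by
    apply IsFractionRing.injective R F
    rw [hPmap, hsum, zero_mul, map_zero]
  have hc := congrArg (coeff (t l0)) hP0
  rw [hPdef] at hc
  rw [MvPolynomial.coeff_sum] at hc
  simp only [coeff_monomial, coeff_zero] at hc
  rw [Finset.sum_eq_single_of_mem l0 hl0] at hc
  · simpa using hc
  · intro l hl hne
    rw [if_neg]
    intro h
    apply hne
    funext i
    have h1 : (((t l) i : ℕ) : ℤ) = (((t l0) i : ℕ) : ℤ) := by rw [h]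
    rw [ht l hl i, ht l0 hl0 i] at h1
    clear hB
    omega
end Aux2

section Aux3
variable {K : Type*} [Field K] {n : ℕ}

local notation "R" => MvPolynomial (Fin n) K
local notation "F" => RatFuncN K n

lemma aux_agree (σ τ : F ≃ₐ[K] F)
    (h : ∀ i, σ ((algebraMap R F) (X i)) = τ ((algebraMap R F) (X i))) : σ = τ := by
  have key : (σ : F →+* F) = (τ : F →+* F) := by
    apply IsLocalization.ringHom_ext (nonZeroDivisors R)
    apply MvPolynomial.ringHom_ext
    · intro r
      simp only [RingHom.coe_comp, Function.comp_apply]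
      exact (σ.commutes r).trans (τ.commutes r).symm
    · intro i
      simpa using h i
  exact AlgEquiv.ext fun z => RingHom.congr_fun key z
end Aux3

set_option maxHeartbeats 1000000 in
theorem stmt_19 (K : Type*) [Field K] (n : ℕ)
    (G : Type*) [Group G] [Finite G]
    (x : Fin n → RatFuncN K n)
    (hx : ∀ i, x i = algebraMap (MvPolynomial (Fin n) K) (RatFuncN K n) (MvPolynomial.X i))
    -- a faithful action of G on K(x₁,…,xₙ) by monomial K-automorphisms
    (ρ : G →* (RatFuncN K n ≃ₐ[K] RatFuncN K n)) (hρ : Function.Injective ρ)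
    (m : G → Matrix (Fin n) (Fin n) ℤ) (a : G → Fin n → K)
    (ha : ∀ g j, a g j ≠ 0)
    (hm : ∀ g, IsUnit (m g).det)
    (hact : ∀ g j, ρ g (x j)
      = algebraMap K (RatFuncN K n) (a g j) * ∏ i, x i ^ (m g i j))
    -- H₀ is the kernel of the exponent-matrix homomorphism G → GLₙ(ℤ):
    -- it consists of the elements acting by scaling each variable
    (H₀ : Set G)
    (hH₀ : H₀ = {g | ∀ j, ∃ c : K, c ≠ 0 ∧
      ρ g (x j) = algebraMap K (RatFuncN K n) c * x j}) :
    -- H₀ is abelian, and its fixed field is K(M₁,…,Mₙ) for algebraically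
    -- independent power products M₁,…,Mₙ in x₁,…,xₙ
    (∀ g ∈ H₀, ∀ h ∈ H₀, g * h = h * g) ∧
    ∃ M : Fin n → RatFuncN K n,
      (∀ j, ∃ lam : Fin n → ℤ, M j = ∏ i, x i ^ (lam i)) ∧
      AlgebraicIndependent K M ∧
      ∀ z : RatFuncN K n,
        (∀ g ∈ H₀, ρ g z = z) ↔ z ∈ IntermediateField.adjoin K (Set.range M) := by
  classical
  haveI : Fintype G := Fintype.ofFinite G
  have hxne : ∀ i, x i ≠ 0 := fun i => by rw [hx]; exact Xf_ne_zero i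
  have hmem : ∀ g ∈ H₀, ∀ j, ∃ c : K, c ≠ 0 ∧
      ρ g (x j) = algebraMap K (RatFuncN K n) c * x j := by
    intro g hg; rw [hH₀] at hg; exact hg
  choose! c hc0 hcx using hmem
  -- uniqueness of scalar
  have huniq : ∀ (u v : K) (j : Fin n),
      algebraMap K (RatFuncN K n) u * x j = algebraMap K (RatFuncN K n) v * x j → u = v := by
    intro u v j h
    have h2 : algebraMap K (RatFuncN K n) u = algebraMap K (RatFuncN K n) v :=
      mul_right_cancel₀ (hxne j) h
    exact (algebraMap K (RatFuncN K n)).injective h2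
  -- H₀ is a subgroup
  have hone : (1 : G) ∈ H₀ := by
    rw [hH₀]; intro j
    exact ⟨1, one_ne_zero, by rw [map_one]; simp⟩
  have hmul : ∀ g ∈ H₀, ∀ h ∈ H₀, g * h ∈ H₀ := by
    intro g hg h hh
    rw [hH₀]; intro j
    refine ⟨c g j * c h j, mul_ne_zero (hc0 g hg j) (hc0 h hh j), ?_⟩
    rw [map_mul ρ, AlgEquiv.mul_apply, hcx h hh j, map_mul, AlgEquiv.commutes,
      hcx g hg j, map_mul]
    ring
  have hinv : ∀ g ∈ H₀, g⁻¹ ∈ H₀ := by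
    intro g hg
    rw [hH₀]; intro j
    refine ⟨(c g j)⁻¹, inv_ne_zero (hc0 g hg j), ?_⟩
    have h1 : ρ g⁻¹ (algebraMap K (RatFuncN K n) (c g j) * x j) = x j := by
      rw [← hcx g hg j, ← AlgEquiv.mul_apply, ← map_mul, inv_mul_cancel, map_one,
        AlgEquiv.one_apply]
    rw [map_mul, AlgEquiv.commutes] at h1
    have hca : algebraMap K (RatFuncN K n) (c g j) ≠ 0 := by
      simpa using hc0 g hg j
    rw [map_inv₀, eq_inv_mul_iff_mul_eq₀ hca]
    exact h1
  -- multiplicativity of c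
  have hcmul : ∀ g ∈ H₀, ∀ h ∈ H₀, ∀ j, c (g * h) j = c g j * c h j := by
    intro g hg h hh j
    apply huniq _ _ j
    rw [← hcx (g*h) (hmul g hg h hh) j, map_mul ρ, AlgEquiv.mul_apply, hcx h hh j,
      map_mul, AlgEquiv.commutes, hcx g hg j, map_mul]
    ring
  have hc1 : ∀ j, c 1 j = 1 := by
    intro j
    apply huniq _ _ j
    rw [← hcx 1 hone j, map_one]
    simp
  have hpowmem : ∀ g ∈ H₀, ∀ k : ℕ, g ^ k ∈ H₀ := by
    intro g hg k
    induction k with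
    | zero => rw [pow_zero]; exact hone
    | succ k ih2 => rw [pow_succ]; exact hmul _ ih2 _ hg
  have hcpow : ∀ g ∈ H₀, ∀ (k : ℕ) (j : Fin n), c (g ^ k) j = (c g j) ^ k := by
    intro g hg k
    induction k with
    | zero => intro j; rw [pow_zero, pow_zero, hc1]
    | succ k ih =>
      intro j
      rw [pow_succ, pow_succ, hcmul _ (hpowmem g hg k) _ hg, ih]
  have hcN : ∀ g ∈ H₀, ∀ j, (c g j) ^ (Fintype.card G) = 1 := by
    intro g hg j
    rw [← hcpow g hg (Fintype.card G) j, pow_card_eq_one, hc1]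
  -- abelian
  have habel : ∀ g ∈ H₀, ∀ h ∈ H₀, g * h = h * g := by
    intro g hg h hh
    apply hρ
    apply aux_agree
    intro i
    rw [← hx i, hcx _ (hmul g hg h hh) i, hcx _ (hmul h hh g hg) i,
      hcmul g hg h hh, hcmul h hh g hg, mul_comm (c g i) (c h i)]
  refine ⟨habel, ?_⟩
  -- Laurent monomials and characters
  set mono : (Fin n → ℤ) → RatFuncN K n := fun l => ∏ i, x i ^ (l i) with hmono
  set chi : G → (Fin n → ℤ) → K := fun g l => ∏ i, c g i ^ (l i) with hchi
  have hrmono : ∀ g ∈ H₀, ∀ l, ρ g (mono l)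
      = algebraMap K (RatFuncN K n) (chi g l) * mono l := by
    intro g hg l
    rw [hmono]
    simp only
    rw [map_prod]
    have hterm : ∀ i : Fin n, ρ g (x i ^ (l i))
        = algebraMap K (RatFuncN K n) ((c g i) ^ (l i)) * x i ^ (l i) := by
      intro i
      rw [map_zpow₀, hcx g hg i, mul_zpow, map_zpow₀]
    rw [Finset.prod_congr rfl (fun i _ => hterm i), Finset.prod_mul_distrib, ← map_prod]
  have hmono_ne : ∀ l, mono l ≠ 0 := by
    intro l
    exact Finset.prod_ne_zero_iff.2 fun i _ => zpow_ne_zero _ (hxne i)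
  have hmono_nat : ∀ (d : Fin n →₀ ℕ) (u : K), algebraMap (MvPolynomial (Fin n) K)
      (RatFuncN K n) (monomial d u) = algebraMap K (RatFuncN K n) u * mono (fun i => (d i : ℤ)) := by
    intro d u
    rw [amono d u, hmono]
    simp only
    congr 1
    exact Finset.prod_congr rfl fun i _ => by rw [hx]
  -- the lattice of invariant exponents
  set L : Submodule ℤ (Fin n → ℤ) :=
    { carrier := {l | ∀ g ∈ H₀, chi g l = 1}
      add_mem' := by
        intro la lb hla hlb g hg
        have hsplit : chi g (la + lb) = chi g la * chi g lb := by
          rw [hchi]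
          simp only
          rw [← Finset.prod_mul_distrib]
          refine Finset.prod_congr rfl fun i _ => ?_
          rw [← zpow_add₀ (hc0 g hg i)]
          rfl
        rw [hsplit, hla g hg, hlb g hg, one_mul]
      zero_mem' := by
        intro g hg
        rw [hchi]
        simp
      smul_mem' := by
        intro k l hl g hg
        have hs : chi g (k • l) = (chi g l) ^ k := by
          rw [hchi]
          simp only
          rw [← Finset.prod_zpow]
          refine Finset.prod_congr rfl fun i _ => ?_
          rw [Pi.smul_apply, smul_eq_mul, zpow_mul']
        rw [hs, hl g hg, one_zpow] } with hL
  have hmemL : ∀ l : Fin n → ℤ, l ∈ L ↔ ∀ g ∈ H₀, chi g l = 1 := fun l => Iff.rfl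
  have hNL : ∀ v : Fin n → ℤ, ((Fintype.card G : ℤ)) • v ∈ L := by
    intro v
    rw [hmemL]
    intro g hg
    rw [hchi]
    simp only
    refine Finset.prod_eq_one fun i _ => ?_
    rw [Pi.smul_apply, smul_eq_mul, zpow_mul, zpow_natCast, hcN g hg i, one_zpow]
  -- rank of L is n
  have hrankle : Module.finrank ℤ L ≤ n := by
    have h1 := Submodule.finrank_le L
    rwa [Module.finrank_pi, Fintype.card_fin] at h1
  have hrankge : n ≤ Module.finrank ℤ L := by
    have hNne : ((Fintype.card G : ℤ)) ≠ 0 := by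
      exact_mod_cast Fintype.card_ne_zero
    let f : (Fin n → ℤ) →ₗ[ℤ] L :=
      LinearMap.codRestrict L ((Fintype.card G : ℤ) • LinearMap.id) hNL
    have hfinj : Function.Injective f := by
      intro u v huv
      have h2 : ((Fintype.card G : ℤ)) • u = ((Fintype.card G : ℤ)) • v := by
        have := congrArg (Subtype.val) huv
        simpa [f, LinearMap.codRestrict] using this
      exact smul_right_injective _ hNne h2
    have := LinearMap.finrank_le_finrank_of_injective hfinj
    rwa [Module.finrank_pi, Fintype.card_fin] at this
  have hrank : Module.finrank ℤ L = n := le_antisymm hrankle hrankge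
  -- a basis of L
  let b : Module.Basis (Fin n) ℤ L := (Module.finBasis ℤ L).reindex (finCongr hrank)
  set lam : Fin n → (Fin n → ℤ) := fun j => ((b j : L) : Fin n → ℤ) with hlam
  have hlamL : ∀ j, lam j ∈ L := fun j => (b j).2
  have hlamLI : LinearIndependent ℤ lam :=
    b.linearIndependent.map' L.subtype (Submodule.ker_subtype L)
  set M : Fin n → RatFuncN K n := fun j => mono (lam j) with hM
  -- decomposition of mono over L
  have hmono_add : ∀ la lb, mono (la + lb) = mono la * mono lb := by
    intro la lb
    rw [hmono]
    simp only
    rw [← Finset.prod_mul_distrib]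
    exact Finset.prod_congr rfl fun i _ => by rw [Pi.add_apply, zpow_add₀ (hxne i)]
  have hmono_zero : mono 0 = 1 := by rw [hmono]; simp
  have hmono_smul : ∀ (k : ℤ) (l : Fin n → ℤ), mono (k • l) = mono l ^ k := by
    intro k l
    rw [hmono]
    simp only
    rw [← Finset.prod_zpow]
    exact Finset.prod_congr rfl fun i _ => by rw [Pi.smul_apply, smul_eq_mul, zpow_mul']
  have hmono_sumdec : ∀ (s : Finset (Fin n)) (k : Fin n → ℤ),
      mono (∑ j ∈ s, k j • lam j) = ∏ j ∈ s, (mono (lam j)) ^ (k j) := by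
    intro s k
    induction s using Finset.induction with
    | empty => simpa using hmono_zero
    | insert _ _ hj ih =>
      rw [Finset.sum_insert hj, Finset.prod_insert hj, hmono_add, hmono_smul, ih]
  set E := IntermediateField.adjoin K (Set.range M) with hE
  have hM_mem : ∀ j, M j ∈ E := fun j => IntermediateField.subset_adjoin K _ ⟨j, rfl⟩
  have hmonoL_mem : ∀ v, ∀ hv : v ∈ L, mono v ∈ E := by
    intro v hv
    have hdec := b.sum_repr ⟨v, hv⟩
    have hdec2 : v = ∑ j, ((b.repr ⟨v, hv⟩ j) : ℤ) • lam j := by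
      have h3 : ((∑ i, (b.repr ⟨v, hv⟩) i • b i : L) : Fin n → ℤ) = v :=
        congrArg Subtype.val hdec
      have h4 : ∑ j, ((b.repr ⟨v, hv⟩ j) : ℤ) • lam j
          = ((∑ i, (b.repr ⟨v, hv⟩) i • b i : L) : Fin n → ℤ) := by
        simp only [hlam, Submodule.coe_sum, Submodule.coe_smul]
      exact (h4.trans h3).symm
    rw [hdec2, hmono_sumdec]
    exact E.prod_mem fun j _ => IntermediateField.pow_mem E (hM_mem j) _
  have hMfix : ∀ g ∈ H₀, ∀ j, ρ g (M j) = M j := by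
    intro g hg j
    rw [hM]
    simp only
    rw [hrmono g hg, (hmemL (lam j)).1 (hlamL j) g hg, map_one, one_mul]
  -- the fixed field as an intermediate field
  set Fix : IntermediateField K (RatFuncN K n) :=
    { carrier := {z | ∀ g ∈ H₀, ρ g z = z}
      mul_mem' := fun hz hw g hg => by rw [map_mul, hz g hg, hw g hg]
      one_mem' := fun g hg => map_one (ρ g)
      add_mem' := fun hz hw g hg => by rw [map_add, hz g hg, hw g hg]
      zero_mem' := fun g hg => map_zero (ρ g)
      algebraMap_mem' := fun r g hg => (ρ g).commutes r
      inv_mem' := fun z hz g hg => by rw [map_inv₀, hz g hg] } with hFixdef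
  have hforward : ∀ z ∈ E, ∀ g ∈ H₀, ρ g z = z := by
    intro z hz
    have hle : E ≤ Fix := by
      rw [hE]
      rw [IntermediateField.adjoin_le_iff]
      rintro _ ⟨j, rfl⟩ g hg
      exact hMfix g hg j
    exact hle hz
  -- the twisted action on polynomials
  have hpsi : ∀ g ∈ H₀, ∀ P : MvPolynomial (Fin n) K,
      ρ g (algebraMap (MvPolynomial (Fin n) K) (RatFuncN K n) P)
        = algebraMap (MvPolynomial (Fin n) K) (RatFuncN K n)
            (∑ d ∈ P.support, monomial d (chi g (fun i => (d i : ℤ)) * coeff d P)) := by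
    intro g hg P
    conv_lhs => rw [as_sum P]
    rw [map_sum, map_sum, map_sum]
    refine Finset.sum_congr rfl fun d _ => ?_
    rw [hmono_nat, map_mul, AlgEquiv.commutes, hrmono g hg, hmono_nat, map_mul]
    ring
  -- fixed polynomials lie in E
  have hpolyfix : ∀ P : MvPolynomial (Fin n) K,
      (∀ g ∈ H₀, ρ g (algebraMap (MvPolynomial (Fin n) K) (RatFuncN K n) P)
        = algebraMap (MvPolynomial (Fin n) K) (RatFuncN K n) P) →
      algebraMap (MvPolynomial (Fin n) K) (RatFuncN K n) P ∈ E := by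
    intro P hP
    have hkey : ∀ d ∈ P.support, (fun i => ((d i : ℕ) : ℤ)) ∈ L := by
      intro d hd
      rw [hmemL]
      intro g hg
      have h1 : (∑ e ∈ P.support, monomial e (chi g (fun i => (e i : ℤ)) * coeff e P)) = P := by
        apply IsFractionRing.injective (MvPolynomial (Fin n) K) (RatFuncN K n)
        rw [← hpsi g hg P, hP g hg]
      have h2 := congrArg (coeff d) h1
      rw [MvPolynomial.coeff_sum] at h2
      simp only [coeff_monomial] at h2
      rw [Finset.sum_eq_single_of_mem d hd (fun e _ hne => if_neg fun hh => hne hh),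
        if_pos rfl] at h2
      conv_rhs at h2 => rw [← one_mul (coeff d P)]
      exact mul_right_cancel₀ (mem_support_iff.1 hd) h2
    have hPsum : algebraMap (MvPolynomial (Fin n) K) (RatFuncN K n) P
        = ∑ d ∈ P.support, algebraMap (MvPolynomial (Fin n) K) (RatFuncN K n)
            (monomial d (coeff d P)) := by
      conv_lhs => rw [as_sum P]
      rw [map_sum]
    rw [hPsum]
    refine E.sum_mem fun d hd => ?_
    rw [hmono_nat]
    exact E.mul_mem (E.algebraMap_mem _) (hmonoL_mem _ (hkey d hd))
  -- backward direction
  have hbackward : ∀ z : RatFuncN K n, (∀ g ∈ H₀, ρ g z = z) → z ∈ E := by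
    intro z hz
    obtain ⟨p, q, hqmem, hpq⟩ :=
      IsFractionRing.div_surjective (A := MvPolynomial (Fin n) K) z
    have hq0 : q ≠ 0 := nonZeroDivisors.ne_zero hqmem
    have hqF : algebraMap (MvPolynomial (Fin n) K) (RatFuncN K n) q ≠ 0 := fun h0 =>
      hq0 (IsFractionRing.injective (MvPolynomial (Fin n) K) (RatFuncN K n)
        (by rw [h0, map_zero]))
    let H : Subgroup G :=
      { carrier := H₀
        mul_mem' := fun ha hb => hmul _ ha _ hb
        one_mem' := hone
        inv_mem' := fun ha => hinv _ ha }
    haveI : Fintype H := Fintype.ofFinite H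
    set q' : RatFuncN K n :=
      ∏ g : H, ρ (g : G) (algebraMap (MvPolynomial (Fin n) K) (RatFuncN K n) q) with hq'
    have hq'fix : ∀ h ∈ H₀, ρ h q' = q' := by
      intro h hh
      rw [hq', map_prod]
      have hre : ∀ g : H, ρ h (ρ (g : G) (algebraMap (MvPolynomial (Fin n) K) (RatFuncN K n) q))
          = ρ (((⟨h, hh⟩ : H) * g : H) : G)
              (algebraMap (MvPolynomial (Fin n) K) (RatFuncN K n) q) := by
        intro g
        rw [← AlgEquiv.mul_apply, ← map_mul]
        rfl
      rw [Finset.prod_congr rfl fun g _ => hre g]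
      exact Equiv.prod_comp (Equiv.mulLeft (⟨h, hh⟩ : H))
        (fun g : H => ρ (g : G) (algebraMap (MvPolynomial (Fin n) K) (RatFuncN K n) q))
    have hq'0 : q' ≠ 0 := by
      rw [hq']
      refine Finset.prod_ne_zero_iff.2 fun g _ => fun h0 => hqF ?_
      exact (ρ (g : G)).injective (by rw [h0, map_zero])
    have hq'img : ∃ Q : MvPolynomial (Fin n) K,
        algebraMap (MvPolynomial (Fin n) K) (RatFuncN K n) Q = q' := by
      refine ⟨∏ g : H, (∑ d ∈ q.support,
        monomial d (chi (g : G) (fun i => (d i : ℤ)) * coeff d q)), ?_⟩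
      rw [map_prod, hq']
      exact Finset.prod_congr rfl fun g _ => (hpsi (g : G) g.2 q).symm
    obtain ⟨Q, hQ⟩ := hq'img
    have hsplit : q' = algebraMap (MvPolynomial (Fin n) K) (RatFuncN K n) q
        * ∏ g ∈ Finset.univ.erase (1 : H),
            ρ ((g : H) : G) (algebraMap (MvPolynomial (Fin n) K) (RatFuncN K n) q) := by
      rw [hq', ← Finset.mul_prod_erase Finset.univ _ (Finset.mem_univ (1 : H))]
      congr 1
      rw [show (((1 : H) : G)) = (1 : G) from rfl, map_one]
      rfl
    have hrimg : ∃ Rr : MvPolynomial (Fin n) K,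
        algebraMap (MvPolynomial (Fin n) K) (RatFuncN K n) Rr
          = ∏ g ∈ Finset.univ.erase (1 : H),
              ρ ((g : H) : G) (algebraMap (MvPolynomial (Fin n) K) (RatFuncN K n) q) := by
      refine ⟨∏ g ∈ Finset.univ.erase (1 : H), (∑ d ∈ q.support,
        monomial d (chi ((g : H) : G) (fun i => (d i : ℤ)) * coeff d q)), ?_⟩
      rw [map_prod]
      exact Finset.prod_congr rfl fun g _ => (hpsi ((g : H) : G) g.2 q).symm
    obtain ⟨Rr, hRr⟩ := hrimg
    have hw : z * q' = algebraMap (MvPolynomial (Fin n) K) (RatFuncN K n) (p * Rr) := by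
      rw [hsplit, ← hpq, map_mul, hRr]
      field_simp
    have hwfix : ∀ g ∈ H₀,
        ρ g (algebraMap (MvPolynomial (Fin n) K) (RatFuncN K n) (p * Rr))
          = algebraMap (MvPolynomial (Fin n) K) (RatFuncN K n) (p * Rr) := by
      intro g hg
      rw [← hw, map_mul, hz g hg, hq'fix g hg]
    have hq'fix2 : ∀ g ∈ H₀,
        ρ g (algebraMap (MvPolynomial (Fin n) K) (RatFuncN K n) Q)
          = algebraMap (MvPolynomial (Fin n) K) (RatFuncN K n) Q := by
      intro g hg
      rw [hQ]
      exact hq'fix g hg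
    have hwmem := hpolyfix (p * Rr) hwfix
    have hq'mem := hpolyfix Q hq'fix2
    rw [hQ] at hq'mem
    rw [← hw] at hwmem
    have hzw : z = (z * q') / q' := by field_simp
    rw [hzw]
    exact E.div_mem hwmem hq'mem
  -- algebraic independence
  have hAI : AlgebraicIndependent K M := by
    rw [algebraicIndependent_iff]
    intro p hp
    set Lam : (Fin n →₀ ℕ) → (Fin n → ℤ) := fun d => ∑ j, ((d j : ℤ)) • lam j with hLam
    have hLaminj : Function.Injective Lam := by
      intro d e hde
      rw [hLam] at hde
      simp only at hde
      have h0 : ∑ j, (((d j : ℤ)) - ((e j : ℤ))) • lam j = 0 := by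
        simp only [sub_smul]
        rw [Finset.sum_sub_distrib, hde, sub_self]
      have hco := linearIndependent_iff'.1 hlamLI Finset.univ _ h0
      ext j
      have hcj := hco j (Finset.mem_univ j)
      omega
    have hexp : aeval M p = ∑ d ∈ p.support, (coeff d p) • mono (Lam d) := by
      conv_lhs => rw [as_sum p]
      rw [map_sum]
      refine Finset.sum_congr rfl fun d _ => ?_
      rw [aeval_monomial, Finsupp.prod_fintype _ _ (fun j => pow_zero _), Algebra.smul_def]
      congr 1
      rw [hLam]
      simp only
      rw [hmono_sumdec]
      refine Finset.prod_congr rfl fun j _ => ?_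
      rw [hM]
      simp only
      rw [zpow_natCast]
    have hli : LinearIndependent K (fun d : Fin n →₀ ℕ => mono (Lam d)) := by
      have h1 : LinearIndependent K (fun l : Fin n → ℤ => mono l) := by
        have hfun : (fun l : Fin n → ℤ => mono l)
            = fun l : Fin n → ℤ => ∏ i, (algebraMap (MvPolynomial (Fin n) K)
                (RatFuncN K n)) (X i) ^ (l i) := by
          funext l
          rw [hmono]
          exact Finset.prod_congr rfl fun i _ => by rw [hx]
        rw [hfun]
        exact laurent_li
      exact h1.comp Lam hLaminj
    have hz := linearIndependent_iff'.1 hli p.support (fun d => coeff d p)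
      (by rw [← hexp, hp])
    ext d
    simp only [coeff_zero]
    by_cases hd : d ∈ p.support
    · exact hz d hd
    · exact notMem_support_iff.1 hd
  exact ⟨M, fun j => ⟨lam j, by rw [hM]⟩, hAI,
    fun z => ⟨fun hz => hbackward z hz, fun hz g hg => hforward z hz g hg⟩⟩
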